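/- Let G be a connected chordal claw-free graph with clique tree T_G. If a max clique B of G has a fork triangle, then the degree of B in T_G is exactly 3. -/

import Mathlib

open SimpleGraph

/-- A graph is *chordal* if every cycle of length at least 4 has a chord, i.e. an
edge of the graph joining two vertices of the cycle that is not an edge of the cycle. -/
def IsChordal {V : Type*} (G : SimpleGraph V) : Prop :=
  ∀ (v : V) (c : G.Walk v v), c.IsCycle → 4 ≤ c.length →
    ∃ u w : V, u ∈ c.support ∧ w ∈ c.support ∧ G.Adj u w ∧ s(u, w) ∉ c.edges

/-- A graph is *claw-free* if it has no induced subgraph isomorphic to the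
complete bipartite graph `K_{1,3}`. -/
def ClawFree {V : Type*} (G : SimpleGraph V) : Prop :=
  IsEmpty (completeBipartiteGraph (Fin 1) (Fin 3) ↪g G)

/-- A *max clique* of `G` is a maximal clique. -/
def IsMaximalClique {V : Type*} (G : SimpleGraph V) (s : Set V) : Prop :=
  G.IsClique s ∧ ∀ t : Set V, G.IsClique t → s ⊆ t → s = t

/-- The type of max cliques of `G`. -/
abbrev MaxClique {V : Type*} (G : SimpleGraph V) : Type _ :=
  {s : Set V // IsMaximalClique G s}

/-- `M_v`: the set of max cliques of `G` containing the vertex `v`. -/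
def cliquesOf {V : Type*} (G : SimpleGraph V) (v : V) : Set (MaxClique G) :=
  {A | v ∈ A.1}

/-- A *clique tree* of `G`: a tree whose vertices are the max cliques of `G` such
that for every vertex `v` of `G` the subgraph induced by `M_v` is connected. -/
structure IsCliqueTree {V : Type*} (G : SimpleGraph V)
    (T : SimpleGraph (MaxClique G)) : Prop where
  isTree : T.IsTree
  induced_connected : ∀ v : V, (T.induce (cliquesOf G v)).Connected

/-- The subgraph of `T` induced by `S` is a path in `T`: there is a path of `T`
whose vertices are exactly `S` and whose edges are exactly the edges of `T`
between vertices of `S`. -/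
def InducedPath {M : Type*} (T : SimpleGraph M) (S : Set M) : Prop :=
  ∃ (a b : M) (p : T.Walk a b), p.IsPath ∧ (∀ A, A ∈ p.support ↔ A ∈ S) ∧
    ∀ A B, A ∈ S → B ∈ S → (T.Adj A B ↔ s(A, B) ∈ p.edges)

/-- `B` is a *star clique*: every vertex of `B` is contained in at most one
neighbor of `B` in the clique tree `T`. -/
def IsStarClique {V : Type*} (G : SimpleGraph V) (T : SimpleGraph (MaxClique G))
    (B : MaxClique G) : Prop :=
  ∀ v ∈ B.1, ∀ A A' : MaxClique G, T.Adj B A → T.Adj B A' →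
    v ∈ A.1 → v ∈ A'.1 → A = A'

/-- `B` is a *fork clique*: `B` has degree 3 in the clique tree `T`, for every
vertex `v ∈ B` there are two distinct neighbors `A, A'` of `B` with
`M_v = {B, A, A'}`, and for all distinct neighbors `A, A'` of `B` there is a
vertex `v` with `M_v = {B, A, A'}`. -/
def IsForkClique {V : Type*} (G : SimpleGraph V) (T : SimpleGraph (MaxClique G))
    (B : MaxClique G) : Prop :=
  (T.neighborSet B).ncard = 3 ∧
  (∀ v ∈ B.1, ∃ A A' : MaxClique G, A ≠ A' ∧ T.Adj B A ∧ T.Adj B A' ∧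
      cliquesOf G v = {B, A, A'}) ∧
  ∀ A A' : MaxClique G, T.Adj B A → T.Adj B A' → A ≠ A' →
      ∃ v : V, cliquesOf G v = {B, A, A'}

/-- The paths `T[S₁]` and `T[S₂]` *fork in `A`*: there is a fork
`(A', A, {A_P, A_Q})`, i.e. `A', A, A_P` are consecutive vertices of the path
`T[S₁]`, `A', A, A_Q` are consecutive vertices of the path `T[S₂]`,
`A_P` does not occur in `T[S₂]` and `A_Q` does not occur in `T[S₁]`. -/
def ForkAt {M : Type*} (T : SimpleGraph M) (S₁ S₂ : Set M) (A : M) : Prop :=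
  ∃ A' AP AQ : M, A' ∈ S₁ ∧ A' ∈ S₂ ∧ A ∈ S₁ ∧ A ∈ S₂ ∧ AP ∈ S₁ ∧ AQ ∈ S₂ ∧
    T.Adj A' A ∧ T.Adj A AP ∧ T.Adj A AQ ∧ A' ≠ AP ∧ A' ≠ AQ ∧ AP ∉ S₂ ∧ AQ ∉ S₁

/-- `A₁, A₂, A₃` form a *fork triangle* around `B`. -/
def FormsForkTriangle {V : Type*} (G : SimpleGraph V) (T : SimpleGraph (MaxClique G))
    (A₁ A₂ A₃ B : MaxClique G) : Prop :=
  A₁ ≠ A₂ ∧ A₁ ≠ A₃ ∧ A₂ ≠ A₃ ∧ T.Adj B A₁ ∧ T.Adj B A₂ ∧ T.Adj B A₃ ∧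
  (∃ u : V, cliquesOf G u = {A₁, B, A₂}) ∧
  (∃ v : V, cliquesOf G v = {A₂, B, A₃}) ∧
  (∃ w : V, cliquesOf G w = {A₃, B, A₁})

/-- `B` has a fork triangle. -/
def HasForkTriangle {V : Type*} (G : SimpleGraph V) (T : SimpleGraph (MaxClique G))
    (B : MaxClique G) : Prop :=
  ∃ A₁ A₂ A₃ : MaxClique G, FormsForkTriangle G T A₁ A₂ A₃ B

/-- In the tree `T` rooted at `R`, `B` is an ancestor of `A` (equivalently, `A` is
a descendant of `B`): `B` lies on the unique path from `R` to `A`.  Every vertex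
is an ancestor/descendant of itself. -/
def IsAncestor {M : Type*} (T : SimpleGraph M) (R A B : M) : Prop :=
  ∀ p : T.Walk R A, p.IsPath → B ∈ p.support

/-- In the tree `T` rooted at `R`, `A` is a child of `P`. -/
def IsChildOf {M : Type*} (T : SimpleGraph M) (R A P : M) : Prop :=
  T.Adj P A ∧ IsAncestor T R A P

/-- `R` is a leaf of `T`: it has exactly one neighbor. -/
def IsLeaf {M : Type*} (T : SimpleGraph M) (R : M) : Prop :=
  (T.neighborSet R).ncard = 1

/-- The triple `(v₁, v₂, v₃)` *spans* the max clique `A`: `A` is the only max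
clique of `G` containing `v₁`, `v₂` and `v₃`. -/
def Spans {V : Type*} (G : SimpleGraph V) (v₁ v₂ v₃ : V) (A : Set V) : Prop :=
  IsMaximalClique G A ∧ v₁ ∈ A ∧ v₂ ∈ A ∧ v₃ ∈ A ∧
    ∀ B : Set V, IsMaximalClique G B → v₁ ∈ B → v₂ ∈ B → v₃ ∈ B → B = A


section Aux

open SimpleGraph Walk

variable {M : Type*} {T : SimpleGraph M}

lemma tree_path_eq (hTree : T.IsTree) {u v : M} {p q : T.Walk u v}
    (hp : p.IsPath) (hq : q.IsPath) : p = q := by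
  obtain ⟨r, -, hr⟩ := hTree.existsUnique_path u v
  rw [hr p hp, hr q hq]

lemma tree_exists_path (hTree : T.IsTree) (u v : M) : ∃ p : T.Walk u v, p.IsPath := by
  classical
  exact (hTree.isConnected.preconnected u v).elim fun w => ⟨w.toPath.1, w.toPath.2⟩

lemma edge_walk_isPath {B A : M} (hBA : T.Adj B A) :
    (Walk.cons hBA Walk.nil).IsPath := by
  rw [Walk.cons_isPath_iff]
  exact ⟨Walk.IsPath.nil, by simp [hBA.ne]⟩

lemma anc_self {B A : M} : IsAncestor T B A A := fun p _ => p.end_mem_support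

lemma not_anc_B {B A : M} (hBA : T.Adj B A) : ¬ IsAncestor T B B A := by
  intro h
  have := h Walk.nil Walk.IsPath.nil
  simp only [Walk.support_nil, List.mem_singleton] at this
  exact hBA.ne' this

/-- A neighbor of `B` appearing on a path starting at `B` must be the second vertex. -/
lemma neighbor_eq_second (hTree : T.IsTree) {B X n C : M} (hBX : T.Adj B X)
    (h : T.Adj B n) (q : T.Walk n C) (hp : (Walk.cons h q).IsPath)
    (hXs : X ∈ (Walk.cons h q).support) : X = n := by
  classical
  rw [Walk.support_cons, List.mem_cons] at hXs
  rcases hXs with rfl | hXq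
  · exact absurd rfl hBX.ne
  · rw [Walk.cons_isPath_iff] at hp
    have hq' : (q.takeUntil X hXq).IsPath := hp.1.takeUntil hXq
    have hB : B ∉ (q.takeUntil X hXq).support :=
      fun hB => hp.2 (q.support_takeUntil_subset hXq hB)
    have hpath : (Walk.cons h (q.takeUntil X hXq)).IsPath :=
      (Walk.cons_isPath_iff h _).2 ⟨hq', hB⟩
    have heq := tree_path_eq hTree hpath (edge_walk_isPath hBX)
    have hlen := congrArg Walk.length heq
    simp only [Walk.length_cons, Walk.length_nil, Nat.add_eq_right,
      Nat.add_right_cancel_iff] at hlen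
    exact (Walk.eq_of_length_eq_zero hlen).symm

lemma anc_disjoint (hTree : T.IsTree) {B A A' C : M} (hBA : T.Adj B A)
    (hBA' : T.Adj B A') (hne : A ≠ A') (h1 : IsAncestor T B C A)
    (h2 : IsAncestor T B C A') : False := by
  obtain ⟨p, hp⟩ := tree_exists_path hTree B C
  have hA := h1 p hp
  have hA' := h2 p hp
  cases p with
  | nil =>
    simp only [Walk.support_nil, List.mem_singleton] at hA
    exact hBA.ne' hA
  | cons h q =>
    exact hne ((neighbor_eq_second hTree hBA h q hp hA).trans
      (neighbor_eq_second hTree hBA' h q hp hA').symm)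

lemma cross_edge (hTree : T.IsTree) {B A D D' : M} (hBA : T.Adj B A)
    (hDD' : T.Adj D D') (hD : ¬ IsAncestor T B D A) (hD' : IsAncestor T B D' A) :
    D = B ∧ D' = A := by
  classical
  rw [IsAncestor] at hD
  push_neg at hD
  obtain ⟨p₀, hp₀, hAp₀⟩ := hD
  by_cases hmem : D' ∈ p₀.support
  · exact absurd (p₀.support_takeUntil_subset hmem
      (hD' (p₀.takeUntil D' hmem) (hp₀.takeUntil hmem))) hAp₀
  · have hrev : D' ∉ p₀.reverse.support := by
      rwa [Walk.support_reverse, List.mem_reverse]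
    have hq : ((Walk.cons hDD'.symm p₀.reverse).reverse : T.Walk B D').IsPath :=
      ((Walk.cons_isPath_iff _ _).2 ⟨hp₀.reverse, hrev⟩).reverse
    have hAq := hD' _ hq
    rw [Walk.support_reverse, List.mem_reverse, Walk.support_cons, List.mem_cons,
      Walk.support_reverse, List.mem_reverse] at hAq
    rcases hAq with hAD' | hmemA
    · refine ⟨?_, hAD'.symm⟩
      subst hAD'
      have heq := tree_path_eq hTree hq (edge_walk_isPath hBA)
      have hlen := congrArg Walk.length heq
      simp only [Walk.length_reverse, Walk.length_cons, Walk.length_nil,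
        Nat.add_eq_right, Nat.add_right_cancel_iff] at hlen
      exact (Walk.eq_of_length_eq_zero hlen).symm
    · exact absurd hmemA hAp₀

lemma cross_walk (hTree : T.IsTree) {B A : M} (hBA : T.Adj B A) {D₀ D₁ : M}
    (q : T.Walk D₀ D₁) (h0 : ¬ IsAncestor T B D₀ A) (h1 : IsAncestor T B D₁ A) :
    A ∈ q.support ∧ B ∈ q.support := by
  induction q with
  | nil => exact absurd h1 h0
  | @cons _ n _ h p ih =>
    by_cases hn : IsAncestor T B n A
    · obtain ⟨hDB, hnA⟩ := cross_edge hTree hBA h h0 hn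
      constructor
      · rw [Walk.support_cons, List.mem_cons]
        exact Or.inr (hnA ▸ p.start_mem_support)
      · rw [Walk.support_cons, List.mem_cons]
        exact Or.inl hDB.symm
    · obtain ⟨hA, hB⟩ := ih hn h1
      simp only [Walk.support_cons, List.mem_cons]
      exact ⟨Or.inr hA, Or.inr hB⟩

end Aux

section Aux2

open SimpleGraph

variable {V : Type*} [Fintype V] {G : SimpleGraph V}

lemma exists_maxClique_superset {s : Set V} (hs : G.IsClique s) :
    ∃ t : MaxClique G, s ⊆ t.1 := by
  have hfin : {t : Set V | G.IsClique t ∧ s ⊆ t}.Finite := Set.toFinite _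
  obtain ⟨t, ⟨ht, hst⟩, hmax⟩ : ∃ t ∈ {t : Set V | G.IsClique t ∧ s ⊆ t},
      ∀ t' ∈ {t : Set V | G.IsClique t ∧ s ⊆ t}, t ≤ t' → t = t' := by
    obtain ⟨t, ht⟩ := hfin.exists_maximal ⟨s, hs, subset_rfl⟩
    exact ⟨t, ht.1, fun t' ht' h => le_antisymm h (ht.2 ht' h)⟩
  exact ⟨⟨t, ht, fun t' ht' htt' => hmax t' ⟨ht', hst.trans htt'⟩ htt'⟩, hst⟩

lemma maxClique_nonempty [Nonempty V] (B : MaxClique G) : ∃ b, b ∈ B.1 := by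
  by_contra h
  push_neg at h
  obtain ⟨v⟩ := ‹Nonempty V›
  have hv : G.IsClique ({v} : Set V) := Set.pairwise_singleton v G.Adj
  have hsub : B.1 ⊆ {v} := fun x hx => absurd hx (h x)
  have := B.2.2 {v} hv hsub
  exact h v (this ▸ rfl)

lemma maxClique_diff_nonempty {A B : MaxClique G} (h : A ≠ B) :
    ∃ a, a ∈ A.1 ∧ a ∉ B.1 := by
  by_contra h'
  push_neg at h'
  exact h (Subtype.ext (A.2.2 B.1 B.2.1 h'))

lemma pair_clique {x y : V} (h : G.Adj x y) : G.IsClique ({x, y} : Set V) := by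
  intro a ha b hb hab
  simp only [Set.mem_insert_iff, Set.mem_singleton_iff] at ha hb
  rcases ha with rfl | rfl <;> rcases hb with rfl | rfl
  · exact absurd rfl hab
  · exact h
  · exact h.symm
  · exact absurd rfl hab

lemma walk_pred_cross {P : V → Prop} {u v : V} (w : G.Walk u v) (hu : ¬ P u)
    (hv : P v) : ∃ z z', G.Adj z z' ∧ ¬ P z ∧ P z' := by
  induction w with
  | nil => exact absurd hv hu
  | @cons _ n _ h p ih =>
    by_cases hn : P n
    · exact ⟨_, _, h, hu, hn⟩
    · exact ih hn hv

lemma no_claw (hcf : ClawFree G) {c x1 x2 x3 : V}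
    (h1 : G.Adj c x1) (h2 : G.Adj c x2) (h3 : G.Adj c x3)
    (h12 : ¬ G.Adj x1 x2) (h13 : ¬ G.Adj x1 x3) (h23 : ¬ G.Adj x2 x3)
    (n12 : x1 ≠ x2) (n13 : x1 ≠ x3) (n23 : x2 ≠ x3) : False := by
  apply hcf.false
  have hadj : ∀ b : Fin 3, G.Adj c (![x1, x2, x3] b) := by
    intro b
    fin_cases b <;> assumption
  have n21 : x2 ≠ x1 := Ne.symm n12
  have n31 : x3 ≠ x1 := Ne.symm n13
  have n32 : x3 ≠ x2 := Ne.symm n23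
  have hne : ∀ a b : Fin 3, a ≠ b → ![x1, x2, x3] a ≠ ![x1, x2, x3] b := by
    intro a b hab
    fin_cases a <;> fin_cases b <;> simp_all
  have h21 : ¬ G.Adj x2 x1 := fun h => h12 h.symm
  have h31 : ¬ G.Adj x3 x1 := fun h => h13 h.symm
  have h32 : ¬ G.Adj x3 x2 := fun h => h23 h.symm
  have hnadj : ∀ a b : Fin 3, ¬ G.Adj (![x1, x2, x3] a) (![x1, x2, x3] b) := by
    intro a b
    fin_cases a <;> fin_cases b <;> simp_all
  refine ⟨⟨Sum.elim (fun _ => c) ![x1, x2, x3], ?_⟩, ?_⟩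
  · rintro (a | a) (b | b) hab
    · exact congrArg Sum.inl (Subsingleton.elim a b)
    · exact absurd (hab : c = _) (hadj b).ne
    · exact absurd (hab : _ = c) (hadj a).ne'
    · refine congrArg Sum.inr ?_
      by_contra hne'
      exact hne a b hne' hab
  · rintro (a | a) (b | b) <;>
      simp only [Function.Embedding.coeFn_mk, Sum.elim_inl, Sum.elim_inr,
        completeBipartiteGraph_adj, Sum.isLeft_inl, Sum.isRight_inl,
        Sum.isLeft_inr, Sum.isRight_inr]
    · change G.Adj c c ↔ _; simp
    · change G.Adj c (![x1, x2, x3] b) ↔ _; simp [hadj b]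
    · change G.Adj (![x1, x2, x3] a) c ↔ _; simp [(hadj a).symm]
    · change G.Adj (![x1, x2, x3] a) (![x1, x2, x3] b) ↔ _; simp [hnadj a b]

end Aux2

section Aux3

open SimpleGraph

variable {V : Type*} [Fintype V] {G : SimpleGraph V} {T : SimpleGraph (MaxClique G)}

lemma walk_in_cliqueTree (hT : IsCliqueTree G T) (v : V) {C₀ C₁ : MaxClique G}
    (h0 : v ∈ C₀.1) (h1 : v ∈ C₁.1) :
    ∃ q : T.Walk C₀ C₁, ∀ D ∈ q.support, v ∈ D.1 := by
  have hr : (T.induce (cliquesOf G v)).Reachable ⟨C₀, h0⟩ ⟨C₁, h1⟩ :=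
    (hT.induced_connected v).preconnected ⟨C₀, h0⟩ ⟨C₁, h1⟩
  refine hr.elim fun w => ⟨w.map (Embedding.induce (cliquesOf G v)).toHom, ?_⟩
  intro D hD
  obtain ⟨⟨D', hD'⟩, -, rfl⟩ := List.mem_map.1 (Eq.mp (congrArg (D ∈ ·) (Walk.support_map _ w)) hD)
  exact hD'

lemma cliques_cross (hT : IsCliqueTree G T) {B A : MaxClique G} (hBA : T.Adj B A)
    {z : V} {C₀ C₁ : MaxClique G} (h0 : z ∈ C₀.1) (h1 : z ∈ C₁.1)
    (hn0 : ¬ IsAncestor T B C₀ A) (hn1 : IsAncestor T B C₁ A) :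
    z ∈ A.1 ∧ z ∈ B.1 := by
  obtain ⟨q, hq⟩ := walk_in_cliqueTree hT z h0 h1
  obtain ⟨hAs, hBs⟩ := cross_walk hT.isTree hBA q hn0 hn1
  exact ⟨hq A hAs, hq B hBs⟩

lemma side_of_not_mem (hT : IsCliqueTree G T) {B A : MaxClique G} (hBA : T.Adj B A)
    {a : V} (haA : a ∈ A.1) (haB : a ∉ B.1) {C : MaxClique G} (hC : a ∈ C.1) :
    IsAncestor T B C A := by
  classical
  intro p hp
  obtain ⟨q, hqsupp⟩ := walk_in_cliqueTree hT a haA hC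
  have hBq : B ∉ q.toPath.1.support :=
    fun hB => haB (hqsupp B (q.support_toPath_subset hB))
  have hpath : (Walk.cons hBA q.toPath.1).IsPath :=
    (Walk.cons_isPath_iff _ _).2 ⟨q.toPath.2, hBq⟩
  rw [tree_path_eq hT.isTree hp hpath, Walk.support_cons, List.mem_cons]
  exact Or.inr (q.toPath.1.start_mem_support)

lemma adj_inter_nonempty [Nonempty V] (hconn : G.Connected) (hT : IsCliqueTree G T)
    {B A : MaxClique G} (hBA : T.Adj B A) : ∃ x, x ∈ B.1 ∧ x ∈ A.1 := by
  by_contra hempty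
  push_neg at hempty
  obtain ⟨b₀, hb₀⟩ := maxClique_nonempty B
  obtain ⟨y₀, hy₀⟩ := maxClique_nonempty A
  set P : V → Prop := fun z => ∃ C : MaxClique G, z ∈ C.1 ∧ IsAncestor T B C A
    with hP
  have key : ∀ z, P z → z ∈ B.1 → False := by
    rintro z ⟨C, hzC, hanc⟩ hzB
    obtain ⟨hzA, hzB'⟩ := cliques_cross hT hBA hzB hzC (not_anc_B hBA) hanc
    exact hempty z hzB' hzA
  have hPb : ¬ P b₀ := fun h => key b₀ h hb₀
  have hPy : P y₀ := ⟨A, hy₀, anc_self⟩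
  obtain ⟨w⟩ := hconn.preconnected b₀ y₀
  obtain ⟨z, z', hadj, hz, hz'⟩ := walk_pred_cross w hPb hPy
  obtain ⟨t, hsub⟩ := exists_maxClique_superset (pair_clique hadj)
  have hzt : z ∈ t.1 := hsub (Set.mem_insert _ _)
  have hz't : z' ∈ t.1 := hsub (Set.mem_insert_of_mem _ rfl)
  have hnanc : ¬ IsAncestor T B t A := fun h => hz ⟨t, hzt, h⟩
  obtain ⟨C', hC', hanc'⟩ := hz'
  obtain ⟨hz'A, hz'B⟩ := cliques_cross hT hBA hz't hC' hnanc hanc'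
  exact hempty z' hz'B hz'A

end Aux3

/-- Let `G` be a connected chordal claw-free graph with clique
tree `T`.  If a max clique `B` has a fork triangle, then the degree of `B` in
`T` is exactly 3. -/
theorem forkTriangle_degree_three {V : Type*} [Fintype V] [Nonempty V]
    (G : SimpleGraph V) (hconn : G.Connected) (hch : IsChordal G)
    (hcf : ClawFree G) (T : SimpleGraph (MaxClique G)) (hT : IsCliqueTree G T)
    (B : MaxClique G) (hft : HasForkTriangle G T B) :
    (T.neighborSet B).ncard = 3 := by
  classical
  obtain ⟨A₁, A₂, A₃, h12, h13, h23, hB1, hB2, hB3, ⟨u, hu⟩, ⟨v, hv⟩, ⟨w, hw⟩⟩ := hft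
  have htree := hT.isTree
  have huA₁ : u ∈ A₁.1 := by
    have h : A₁ ∈ cliquesOf G u := by rw [hu]; simp
    exact h
  have huB : u ∈ B.1 := by
    have h : B ∈ cliquesOf G u := by rw [hu]; simp
    exact h
  have huA₂ : u ∈ A₂.1 := by
    have h : A₂ ∈ cliquesOf G u := by rw [hu]; simp
    exact h
  have hvA₂ : v ∈ A₂.1 := by
    have h : A₂ ∈ cliquesOf G v := by rw [hv]; simp
    exact h
  have hvB : v ∈ B.1 := by
    have h : B ∈ cliquesOf G v := by rw [hv]; simp
    exact h
  have hwA₃ : w ∈ A₃.1 := by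
    have h : A₃ ∈ cliquesOf G w := by rw [hw]; simp
    exact h
  have hwB : w ∈ B.1 := by
    have h : B ∈ cliquesOf G w := by rw [hw]; simp
    exact h
  suffices hset : T.neighborSet B = {A₁, A₂, A₃} by
    rw [hset, Set.ncard_eq_three]
    exact ⟨A₁, A₂, A₃, h12, h13, h23, rfl⟩
  apply Set.eq_of_subset_of_subset
  · intro A₄ hmem
    have hadj : T.Adj B A₄ := hmem
    by_contra h4
    simp only [Set.mem_insert_iff, Set.mem_singleton_iff, not_or] at h4
    obtain ⟨hn1, hn2, hn3⟩ := h4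
    -- u, v, w do not belong to A₄
    have hu4 : u ∉ A₄.1 := by
      intro h
      have h' : A₄ ∈ cliquesOf G u := h
      rw [hu] at h'
      simp only [Set.mem_insert_iff, Set.mem_singleton_iff] at h'
      rcases h' with h' | h' | h'
      exacts [hn1 h', hadj.ne' h', hn2 h']
    have hv4 : v ∉ A₄.1 := by
      intro h
      have h' : A₄ ∈ cliquesOf G v := h
      rw [hv] at h'
      simp only [Set.mem_insert_iff, Set.mem_singleton_iff] at h'
      rcases h' with h' | h' | h'
      exacts [hn2 h', hadj.ne' h', hn3 h']
    have hw4 : w ∉ A₄.1 := by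
      intro h
      have h' : A₄ ∈ cliquesOf G w := h
      rw [hw] at h'
      simp only [Set.mem_insert_iff, Set.mem_singleton_iff] at h'
      rcases h' with h' | h' | h'
      exacts [hn3 h', hadj.ne' h', hn1 h']
    obtain ⟨x, hxB, hx4⟩ := adj_inter_nonempty hconn hT hadj
    obtain ⟨y, hy4, hyB⟩ := maxClique_diff_nonempty (show A₄ ≠ B from hadj.ne')
    obtain ⟨a, haA1, haB⟩ := maxClique_diff_nonempty (show A₁ ≠ B from hB1.ne')
    obtain ⟨b, hbA2, hbB⟩ := maxClique_diff_nonempty (show A₂ ≠ B from hB2.ne')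
    obtain ⟨cc, hcA3, hcB⟩ := maxClique_diff_nonempty (show A₃ ≠ B from hB3.ne')
    have hMa : ∀ C : MaxClique G, a ∈ C.1 → IsAncestor T B C A₁ :=
      fun C hC => side_of_not_mem hT hB1 haA1 haB hC
    have hMb : ∀ C : MaxClique G, b ∈ C.1 → IsAncestor T B C A₂ :=
      fun C hC => side_of_not_mem hT hB2 hbA2 hbB hC
    have hMc : ∀ C : MaxClique G, cc ∈ C.1 → IsAncestor T B C A₃ :=
      fun C hC => side_of_not_mem hT hB3 hcA3 hcB hC
    have hMy : ∀ C : MaxClique G, y ∈ C.1 → IsAncestor T B C A₄ :=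
      fun C hC => side_of_not_mem hT hadj hy4 hyB hC
    have side_nonadj : ∀ N N' : MaxClique G, T.Adj B N → T.Adj B N' → N ≠ N' →
        ∀ p q : V, (∀ C, p ∈ C.1 → IsAncestor T B C N) →
        (∀ C, q ∈ C.1 → IsAncestor T B C N') → ¬ G.Adj p q := by
      intro N N' hN hN' hNN' p q hp hq hpq
      obtain ⟨t, hsub⟩ := exists_maxClique_superset (pair_clique hpq)
      exact anc_disjoint htree hN hN' hNN' (hp t (hsub (Set.mem_insert _ _)))
        (hq t (hsub (Set.mem_insert_of_mem _ rfl)))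
    have side_ne : ∀ N N' : MaxClique G, T.Adj B N → T.Adj B N' → N ≠ N' →
        ∀ p q : V, p ∈ N.1 → (∀ C, q ∈ C.1 → IsAncestor T B C N') → p ≠ q := by
      intro N N' hN hN' hNN' p q hpN hq h
      subst h
      exact anc_disjoint htree hN hN' hNN' anc_self (hq N hpN)
    have hMz_nonadj : ∀ (z : V) (C1 C2 N : MaxClique G), T.Adj B C1 → T.Adj B C2 →
        T.Adj B N → C1 ≠ N → C2 ≠ N → cliquesOf G z = {C1, B, C2} →
        ∀ p : V, (∀ C, p ∈ C.1 → IsAncestor T B C N) → ¬ G.Adj z p := by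
      intro z C1 C2 N hC1 hC2 hN hne1 hne2 hM p hp hzp
      obtain ⟨t, hsub⟩ := exists_maxClique_superset (pair_clique hzp)
      have hzt : z ∈ t.1 := hsub (Set.mem_insert _ _)
      have hpt : p ∈ t.1 := hsub (Set.mem_insert_of_mem _ rfl)
      have hanc := hp t hpt
      have ht : t ∈ cliquesOf G z := hzt
      rw [hM] at ht
      simp only [Set.mem_insert_iff, Set.mem_singleton_iff] at ht
      rcases ht with rfl | rfl | rfl
      · exact anc_disjoint htree hN hC1 (Ne.symm hne1) hanc anc_self
      · exact not_anc_B hN hanc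
      · exact anc_disjoint htree hN hC2 (Ne.symm hne2) hanc anc_self
    have hx_nonadj : ∀ N : MaxClique G, T.Adj B N → x ∉ N.1 →
        ∀ p : V, (∀ C, p ∈ C.1 → IsAncestor T B C N) → ¬ G.Adj x p := by
      intro N hN hxN p hp hxp
      obtain ⟨t, hsub⟩ := exists_maxClique_superset (pair_clique hxp)
      have hanc := hp t (hsub (Set.mem_insert_of_mem _ rfl))
      exact hxN (cliques_cross hT hN hxB (hsub (Set.mem_insert _ _))
        (not_anc_B hN) hanc).1
    by_cases hx1 : x ∈ A₁.1
    · exact no_claw hcf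
        (A₁.2.1 hx1 haA1 (fun h => haB (h ▸ hxB)))
        (B.2.1 hxB hvB (fun h => hv4 (h.symm ▸ hx4)))
        (A₄.2.1 hx4 hy4 (fun h => hyB (h ▸ hxB)))
        (fun h => hMz_nonadj v A₂ A₃ A₁ hB2 hB3 hB1 (Ne.symm h12) (Ne.symm h13)
          hv a hMa h.symm)
        (side_nonadj A₁ A₄ hB1 hadj (fun h => hn1 h.symm) a y hMa hMy)
        (hMz_nonadj v A₂ A₃ A₄ hB2 hB3 hadj (fun h => hn2 h.symm)
          (fun h => hn3 h.symm) hv y hMy)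
        (fun h => haB (h ▸ hvB))
        (side_ne A₁ A₄ hB1 hadj (fun h => hn1 h.symm) a y haA1 hMy)
        (fun h => hyB (h.symm ▸ hvB))
    · by_cases hx2 : x ∈ A₂.1
      · exact no_claw hcf
          (A₂.2.1 hx2 hbA2 (fun h => hbB (h ▸ hxB)))
          (B.2.1 hxB hwB (fun h => hw4 (h.symm ▸ hx4)))
          (A₄.2.1 hx4 hy4 (fun h => hyB (h ▸ hxB)))
          (fun h => hMz_nonadj w A₃ A₁ A₂ hB3 hB1 hB2 (Ne.symm h23) h12
            hw b hMb h.symm)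
          (side_nonadj A₂ A₄ hB2 hadj (fun h => hn2 h.symm) b y hMb hMy)
          (hMz_nonadj w A₃ A₁ A₄ hB3 hB1 hadj (fun h => hn3 h.symm)
            (fun h => hn1 h.symm) hw y hMy)
          (fun h => hbB (h ▸ hwB))
          (side_ne A₂ A₄ hB2 hadj (fun h => hn2 h.symm) b y hbA2 hMy)
          (fun h => hyB (h.symm ▸ hwB))
      · by_cases hx3 : x ∈ A₃.1
        · exact no_claw hcf
            (A₃.2.1 hx3 hcA3 (fun h => hcB (h ▸ hxB)))
            (B.2.1 hxB huB (fun h => hu4 (h.symm ▸ hx4)))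
            (A₄.2.1 hx4 hy4 (fun h => hyB (h ▸ hxB)))
            (fun h => hMz_nonadj u A₁ A₂ A₃ hB1 hB2 hB3 h13 h23
              hu cc hMc h.symm)
            (side_nonadj A₃ A₄ hB3 hadj (fun h => hn3 h.symm) cc y hMc hMy)
            (hMz_nonadj u A₁ A₂ A₄ hB1 hB2 hadj (fun h => hn1 h.symm)
              (fun h => hn2 h.symm) hu y hMy)
            (fun h => hcB (h ▸ huB))
            (side_ne A₃ A₄ hB3 hadj (fun h => hn3 h.symm) cc y hcA3 hMy)
            (fun h => hyB (h.symm ▸ huB))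
        · exact no_claw hcf
            (A₁.2.1 huA₁ haA1 (fun h => haB (h ▸ huB)))
            (A₂.2.1 huA₂ hbA2 (fun h => hbB (h ▸ huB)))
            (B.2.1 huB hxB (fun h => hu4 (h.symm ▸ hx4)))
            (side_nonadj A₁ A₂ hB1 hB2 h12 a b hMa hMb)
            (fun h => hx_nonadj A₁ hB1 hx1 a hMa h.symm)
            (fun h => hx_nonadj A₂ hB2 hx2 b hMb h.symm)
            (side_ne A₁ A₂ hB1 hB2 h12 a b haA1 hMb)
            (fun h => haB (h.symm ▸ hxB))
            (fun h => hbB (h.symm ▸ hxB))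
  · intro C hC
    simp only [Set.mem_insert_iff, Set.mem_singleton_iff] at hC
    rcases hC with rfl | rfl | rfl
    exacts [hB1, hB2, hB3]
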